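/- For nonnegative integers m, n and any x, (-1)^m * sum_{i=0}^{m} binomial(m,i) * B_{n+i}(x) = (-1)^n * sum_{j=0}^{n} binomial(n,j) * B_{m+j}(-x). -/

import Mathlib

open Finset

section Aux
open Polynomial

private lemma poly_ext_of_deriv {p q : ℚ[X]} (h : derivative p = derivative q)
    (h0 : p.eval 0 = q.eval 0) : p = q := by
  have hz : derivative (p - q) = 0 := by rw [derivative_sub, h, sub_self]
  have hc := eq_C_of_derivative_eq_zero hz
  have h2 : (p - q).eval 0 = 0 := by simp [h0]
  rw [hc] at h2
  simp only [eval_C] at h2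
  have h3 : p - q = 0 := by rw [hc, h2, map_zero]
  exact sub_eq_zero.mp h3

private lemma bern_reflect_poly (n : ℕ) :
    (Polynomial.bernoulli n).comp (1 - X) = (-1 : ℚ) ^ n • Polynomial.bernoulli n := by
  induction n with
  | zero => simp [Polynomial.bernoulli_zero]
  | succ n ih =>
    apply poly_ext_of_deriv
    · rw [derivative_comp, derivative_smul, Polynomial.derivative_bernoulli (n + 1)]
      simp only [Nat.add_sub_cancel, derivative_sub, derivative_one, derivative_X, zero_sub]
      rw [mul_comp, natCast_comp, ih]
      simp only [smul_eq_C_mul, map_pow, map_neg, map_one]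
      ring
    · simp only [eval_comp, eval_sub, eval_one, eval_X, sub_zero, eval_smul,
        Polynomial.bernoulli_eval_one, Polynomial.bernoulli_eval_zero, smul_eq_mul]
      rw [bernoulli'_eq_bernoulli]

private lemma bern_add_one_poly (n : ℕ) :
    ∑ k ∈ range (n + 1), (n.choose k : ℚ) • Polynomial.bernoulli k =
      (Polynomial.bernoulli n).comp (X + 1) := by
  induction n with
  | zero => simp [Polynomial.bernoulli_zero]
  | succ n ih =>
    apply poly_ext_of_deriv
    · rw [derivative_comp, derivative_sum]
      simp only [derivative_smul, Polynomial.derivative_bernoulli, derivative_add, derivative_X,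
        derivative_one, add_zero, one_mul, Nat.add_sub_cancel]
      rw [mul_comp, natCast_comp, ← ih, Finset.sum_range_succ']
      simp only [Nat.choose_zero_right, Nat.cast_zero, zero_mul, smul_zero, add_zero,
        Nat.add_sub_cancel, Finset.mul_sum]
      refine Finset.sum_congr rfl fun k _ => ?_
      have h := Nat.add_one_mul_choose_eq n k
      have hq : ((n:ℚ) + 1) * (n.choose k : ℚ) = ((n + 1).choose (k + 1) : ℚ) * ((k : ℚ) + 1) := by
        exact_mod_cast congrArg (Nat.cast : ℕ → ℚ) h
      rw [smul_eq_C_mul, smul_eq_C_mul, ← C_eq_natCast (k + 1), ← C_eq_natCast (n + 1),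
        ← mul_assoc, ← mul_assoc, ← C_mul, ← C_mul]
      have hc : ((n + 1).choose (k + 1) : ℚ) * ((k : ℚ) + 1) = ((n : ℚ) + 1) * (n.choose k : ℚ) :=
        hq.symm
      rw [show (((k : ℕ) + 1 : ℕ) : ℚ) = (k : ℚ) + 1 by push_cast; ring,
        show (((n : ℕ) + 1 : ℕ) : ℚ) = (n : ℚ) + 1 by push_cast; ring, hc]
    · simp only [eval_finset_sum, eval_smul, Polynomial.bernoulli_eval_zero, smul_eq_mul,
        eval_comp, eval_add, eval_X, eval_one, zero_add, Polynomial.bernoulli_eval_one]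
      rw [Finset.sum_range_succ, _root_.sum_bernoulli, Nat.choose_self, Nat.cast_one, one_mul]
      rcases eq_or_ne n 0 with rfl | hn
      · norm_num [bernoulli'_one, _root_.bernoulli_one]
      · rw [if_neg (by omega), zero_add, bernoulli_eq_bernoulli'_of_ne_one (by omega)]

private lemma bern_reflect_eval (n : ℕ) (x : ℚ) :
    (Polynomial.bernoulli n).eval (1 - x) = (-1 : ℚ) ^ n * (Polynomial.bernoulli n).eval x := by
  have := congrArg (Polynomial.eval x) (bern_reflect_poly n)
  simpa [eval_comp] using this

private lemma bern_add_eval (n : ℕ) (y : ℚ) :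
    ∑ k ∈ range (n + 1), (n.choose k : ℚ) * (Polynomial.bernoulli k).eval y =
      (Polynomial.bernoulli n).eval (y + 1) := by
  have := congrArg (Polynomial.eval y) (bern_add_one_poly n)
  simpa [eval_finset_sum, eval_comp] using this

private noncomputable def T (a b : ℕ) (y : ℚ) : ℚ :=
  ∑ i ∈ range (a + 1), (a.choose i : ℚ) * (Polynomial.bernoulli (b + i)).eval y

private lemma T_rec (a b : ℕ) (y : ℚ) : T (a + 1) b y = T a b y + T a (b + 1) y := by
  unfold T
  rw [Finset.sum_range_succ']
  simp only [Nat.choose_succ_succ, Nat.cast_add, add_mul, Finset.sum_add_distrib,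
    Nat.choose_zero_right, Nat.cast_one, one_mul, add_zero]
  have h1 : ∑ i ∈ range (a + 1), (a.choose i : ℚ) * (Polynomial.bernoulli (b + (i + 1))).eval y =
      ∑ i ∈ range (a + 1), (a.choose i : ℚ) * (Polynomial.bernoulli (b + 1 + i)).eval y := by
    refine Finset.sum_congr rfl fun i _ => by rw [show b + (i + 1) = b + 1 + i by omega]
  have h2 := Finset.sum_range_succ'
    (fun i => (a.choose i : ℚ) * (Polynomial.bernoulli (b + i)).eval y) (a + 1)
  have h3 := Finset.sum_range_succ
    (fun i => (a.choose i : ℚ) * (Polynomial.bernoulli (b + i)).eval y) (a + 1)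
  simp only [Nat.choose_succ_self, Nat.cast_zero, zero_mul, add_zero, Nat.choose_zero_right,
    Nat.cast_one, one_mul] at h2 h3
  rw [h1]
  linarith [h2, h3]

private lemma key (x : ℚ) : ∀ m n : ℕ, (-1 : ℚ) ^ m * T m n x = (-1 : ℚ) ^ n * T n m (-x) := by
  intro m
  induction m with
  | zero =>
    intro n
    have hT0 : T 0 n x = (Polynomial.bernoulli n).eval x := by
      simp [T]
    have hTn : T n 0 (-x) = (Polynomial.bernoulli n).eval (1 - x) := by
      unfold T
      simp only [zero_add]
      rw [bern_add_eval n (-x)]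
      congr 1
      ring
    rw [hT0, hTn, bern_reflect_eval, ← mul_assoc, ← mul_pow]
    simp
  | succ m ih =>
    intro n
    have h1 := ih n
    have h2 := ih (n + 1)
    rw [T_rec n m (-x)] at h2
    rw [T_rec]
    linear_combination -h1 - h2

end Aux

theorem wu_sun_pan_bernoulli_poly_reflection (m n : ℕ) (x : ℚ) :
    (-1 : ℚ) ^ m * ∑ i ∈ range (m + 1),
        (m.choose i : ℚ) * (Polynomial.bernoulli (n + i)).eval x =
    (-1 : ℚ) ^ n * ∑ j ∈ range (n + 1),
        (n.choose j : ℚ) * (Polynomial.bernoulli (m + j)).eval (-x) := by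
  exact key x m n
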